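/- Let K ≥ 1 be an integer and η > 0, τ > 0 reals, and let μ_T : {1,…,K} → ℝ satisfy μ_T(t) ≥ 0 for all t. Define μ_e(l) = η·∑_{t=l+1}^{K} τ^{t−l−1}·μ_T(t) for l ∈ {0,…,K−1}. Then for all indices 0 ≤ l ≤ k ≤ K−1 one has μ_e(l) ≥ τ^{k−l}·μ_e(k); in particular, if μ_e(k) > 0 then μ_e(l) > 0 for every l with 0 ≤ l ≤ k. -/

import Mathlib

/-- Second part of Lemma 1: the multiplier `μe` of the relaxed quadratic
constraint satisfies `μe l ≥ τ^{k−l}·μe k` for all `0 ≤ l ≤ k ≤ K−1`; in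
particular strict activity propagates backward in time: if `μe k > 0` then
`μe l > 0` for every `l ≤ k`. -/
theorem relaxation_multiplier_backward_propagation
    (K : ℕ) (hK : 1 ≤ K) (η τ : ℝ) (hη : 0 < η) (hτ : 0 < τ)
    (μT : ℕ → ℝ) (hμT : ∀ t, 1 ≤ t → t ≤ K → 0 ≤ μT t)
    (μe : ℕ → ℝ)
    (hμe : ∀ l, l ≤ K - 1 →
      μe l = η * ∑ t ∈ Finset.Icc (l + 1) K, τ ^ (t - l - 1) * μT t) :
    ∀ l k, l ≤ k → k ≤ K - 1 →
      τ ^ (k - l) * μe k ≤ μe l ∧ (0 < μe k → 0 < μe l) := by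
  intro l k hlk hkK
  have hlK : l ≤ K - 1 := hlk.trans hkK
  have h1 := hμe l hlK
  have h2 := hμe k hkK
  have key : τ ^ (k - l) * μe k ≤ μe l := by
    rw [h1, h2, mul_left_comm, Finset.mul_sum]
    have heq : ∀ t ∈ Finset.Icc (k + 1) K,
        τ ^ (k - l) * (τ ^ (t - k - 1) * μT t) = τ ^ (t - l - 1) * μT t := by
      intro t ht
      rw [Finset.mem_Icc] at ht
      rw [← mul_assoc, ← pow_add]
      congr 2
      omega
    rw [Finset.sum_congr rfl heq]
    apply mul_le_mul_of_nonneg_left _ hη.le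
    apply Finset.sum_le_sum_of_subset_of_nonneg
    · exact Finset.Icc_subset_Icc (by omega) le_rfl
    · intro t ht _
      rw [Finset.mem_Icc] at ht
      exact mul_nonneg (pow_nonneg hτ.le _) (hμT t (by omega) ht.2)
  refine ⟨key, fun hk => lt_of_lt_of_le ?_ key⟩
  exact mul_pos (pow_pos hτ _) hk
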